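/- Let k ≥ 1 and let U ∈ P^{(k)} satisfy ‖U − I‖₂ ≤ δ for some δ < 2^{−k+3/2}. Then there exists θ ∈ [−2δ, 2δ] such that U = e^{iθ} I. -/

import Mathlib

open Matrix Complex

namespace CH

variable (d n : ℕ) [NeZero d]

/-- Phase space `F_d^{2n}`, written as pairs `(u, v)` with `u, v ∈ F_d^n`. -/
abbrev PSpace := (Fin n → ZMod d) × (Fin n → ZMod d)

/-- Linear maps on `ℂ^{F_d^n}`, as matrices. -/
abbrev Mat := Matrix (Fin n → ZMod d) (Fin n → ZMod d) ℂ

/-- `ω = e^{2πi/d}`. -/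
noncomputable def omg : ℂ := Complex.exp (2 * Real.pi * Complex.I / d)

/-- `τ = (-1)^d e^{iπ/d}`. -/
noncomputable def tau : ℂ := (-1 : ℂ) ^ d * Complex.exp (Real.pi * Complex.I / d)

/-- `D = 2d` if `d = 2`, else `D = d`. -/
def Dd : ℕ := if d = 2 then 4 else d

/-- The translation operator `X^v`, with `X^v |u⟩ = |u + v⟩`. -/
noncomputable def Xop (v : Fin n → ZMod d) : Mat d n :=
  Matrix.of fun u u' => if u = u' + v then 1 else 0

/-- The phase operator `Z^v`, with `Z^v |u⟩ = ω^{u·v} |u⟩`. -/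
noncomputable def Zop (v : Fin n → ZMod d) : Mat d n :=
  Matrix.diagonal fun u => omg d ^ (∑ i, u i * v i : ZMod d).val

/-- The Weyl operator `W_{(u,v)} = τ^{-(|u₁v₁| + ⋯ + |uₙvₙ|)} Z^u X^v`. -/
noncomputable def Weyl (a : PSpace d n) : Mat d n :=
  tau d ^ (-(∑ i, ((a.1 i * a.2 i).val : ℤ))) • (Zop d n a.1 * Xop d n a.2)

/-- Normalized trace inner product `⟨A,B⟩ = d^{-n} tr(A* B)`. -/
noncomputable def trInner (A B : Mat d n) : ℂ := ((d : ℂ) ^ n)⁻¹ * (Aᴴ * B).trace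

/-- Normalized Frobenius norm `‖A‖₂ = ⟨A,A⟩^{1/2}`. -/
noncomputable def hsNorm (A : Mat d n) : ℝ := Real.sqrt (trInner d n A A).re

/-- Pauli derivative `∂_h U = W_h U W_h* U*`. -/
noncomputable def pderiv (h : PSpace d n) (U : Mat d n) : Mat d n :=
  Weyl d n h * U * (Weyl d n h)ᴴ * Uᴴ

/-- The quantity `‖U‖_{P^k}^{2^k} = E_{h₁,…,h_k} d^{-n} tr(∂_{h_k} ⋯ ∂_{h₁} U)`. -/
noncomputable def pq : ℕ → Mat d n → ℂ
  | 0, U => ((d : ℂ) ^ n)⁻¹ * U.trace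
  | (k+1), U => ((d : ℂ) ^ (2*n))⁻¹ * ∑ h : PSpace d n, pq k (pderiv d n h U)

/-- The `k`-th Pauli uniformity norm `‖U‖_{P^k}`, the `2^k`-th root of `pq k U`. -/
noncomputable def pnorm (k : ℕ) (U : Mat d n) : ℝ := (pq d n k U).re ^ (((2:ℝ) ^ k)⁻¹)

/-- The Pauli group `C^{(1)} = {τ^p W_h : p ∈ Z_D, h ∈ F_d^{2n}}`. -/
def pauliGroup : Set (Mat d n) :=
  {U | ∃ (p : ℕ) (h : PSpace d n), U = tau d ^ p • Weyl d n h}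

/-- The Clifford hierarchy. -/
def cliff : ℕ → Set (Mat d n)
  | 0 => {U | ∃ θ : ℝ, U = Complex.exp (θ * Complex.I) • (1 : Mat d n)}
  | 1 => pauliGroup d n
  | (k+2) => {U | U ∈ unitary (Mat d n) ∧
      ∀ P ∈ pauliGroup d n, U * P * Uᴴ ∈ cliff (k+1)}

/-- Pauli polynomials of degree at most `k`. -/
def ppoly : ℕ → Set (Mat d n)
  | 0 => {U | ∃ θ : ℝ, U = Complex.exp (θ * Complex.I) • (1 : Mat d n)}
  | (k+1) => {U | U ∈ unitary (Mat d n) ∧ ∀ h : PSpace d n, pderiv d n h U ∈ ppoly k}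

/-- Symplectic form `[(u,v),(u',v')] = u·v' - u'·v` on `F_d^{2n}`. -/
def symp (a b : PSpace d n) : ZMod d :=
  (∑ i, a.1 i * b.2 i) - (∑ i, b.1 i * a.2 i)

/-- Multiplication of the Heisenberg group. -/
def heisMul (β : PSpace d n → PSpace d n → ZMod (Dd d))
    (x y : ZMod (Dd d) × PSpace d n) : ZMod (Dd d) × PSpace d n :=
  (x.1 + y.1 + β x.2 y.2, x.2 + y.2)


/-! ### Auxiliary development -/

set_option linter.unusedSectionVars false
set_option maxHeartbeats 1000000

/-- The character `χ(t) = ω^{|t|}` on `ZMod d`. -/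
noncomputable def chi (t : ZMod d) : ℂ := omg d ^ t.val

lemma omg_prim : IsPrimitiveRoot (omg d) d := by
  simpa [omg] using Complex.isPrimitiveRoot_exp d (NeZero.ne d)

lemma omg_pow_d : omg d ^ d = 1 := (omg_prim d).pow_eq_one

lemma chi_zero : chi d 0 = 1 := by simp [chi, ZMod.val_zero]

lemma chi_add (s t : ZMod d) : chi d (s + t) = chi d s * chi d t := by
  unfold chi
  rw [← pow_add, ZMod.val_add, ← pow_eq_pow_mod _ (omg_pow_d d)]

lemma abs_omg : ‖omg d‖ = 1 := by
  have h : (2 * (Real.pi:ℂ) * Complex.I / (d:ℂ)) = ((2 * Real.pi / d : ℝ) : ℂ) * Complex.I := by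
    push_cast; ring
  rw [omg, h, Complex.norm_exp]
  simp

lemma abs_chi (t : ZMod d) : ‖chi d t‖ = 1 := by
  rw [chi, norm_pow, abs_omg, one_pow]

lemma chi_mul_conj (s t : ZMod d) : chi d s * (starRingEnd ℂ) (chi d t) = chi d (s - t) := by
  have h1 : chi d (s - t) * chi d t = chi d s := by rw [← chi_add]; ring_nf
  have h2 : chi d t * (starRingEnd ℂ) (chi d t) = 1 := by
    rw [Complex.mul_conj]
    norm_cast
    rw [← Complex.sq_norm, abs_chi]; norm_num
  calc chi d s * (starRingEnd ℂ) (chi d t)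
      = chi d (s - t) * (chi d t * (starRingEnd ℂ) (chi d t)) := by rw [← mul_assoc, h1]
    _ = chi d (s - t) := by rw [h2, mul_one]

lemma chi_ne_one {t : ZMod d} (ht : t ≠ 0) : chi d t ≠ 1 := by
  intro h
  have hdvd : d ∣ t.val := ((omg_prim d).pow_eq_one_iff_dvd t.val).mp h
  have hlt : t.val < d := ZMod.val_lt t
  have hne : t.val ≠ 0 := fun h0 => ht ((ZMod.val_eq_zero t).mp h0)
  exact absurd (Nat.le_of_dvd (Nat.pos_of_ne_zero hne) hdvd) (not_le.mpr hlt)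

lemma sum_chi (c : Fin n → ZMod d) :
    ∑ u : Fin n → ZMod d, chi d (∑ i, c i * u i)
      = if c = 0 then ((d:ℂ))^n else 0 := by
  rcases eq_or_ne c 0 with rfl | hc
  · simp only [Pi.zero_apply, zero_mul, Finset.sum_const_zero, chi_zero, if_pos rfl,
      Finset.sum_const, Finset.card_univ, nsmul_eq_mul, mul_one]
    rw [Fintype.card_fun]
    simp [ZMod.card]
  · rw [if_neg hc]
    obtain ⟨j, hj⟩ : ∃ j, c j ≠ 0 := by
      by_contra h; push_neg at h; exact hc (funext h)
    set w : Fin n → ZMod d := Pi.single j (1 : ZMod d) with hw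
    have hcw : ∑ i, c i * w i = c j := by
      rw [hw]
      simp [Pi.single_apply, mul_ite, Finset.sum_ite_eq']
    set S := ∑ u : Fin n → ZMod d, chi d (∑ i, c i * u i) with hS
    have hshift : S = chi d (c j) * S := by
      have h1 : ∑ u : Fin n → ZMod d, chi d (∑ i, c i * (u + w) i)
          = ∑ u : Fin n → ZMod d, chi d (∑ i, c i * u i) :=
        Equiv.sum_comp (Equiv.addRight w) (fun u => chi d (∑ i, c i * u i))
      have h2 : ∀ u : Fin n → ZMod d,
          chi d (∑ i, c i * (u + w) i) = chi d (c j) * chi d (∑ i, c i * u i) := by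
        intro u
        have : ∑ i, c i * (u + w) i = (∑ i, c i * u i) + c j := by
          rw [← hcw, ← Finset.sum_add_distrib]
          congr 1; ext i; rw [Pi.add_apply]; ring
        rw [this, chi_add, mul_comm]
      calc S = ∑ u : Fin n → ZMod d, chi d (∑ i, c i * (u + w) i) := h1.symm
        _ = ∑ u : Fin n → ZMod d, chi d (c j) * chi d (∑ i, c i * u i) :=
            Finset.sum_congr rfl (fun u _ => h2 u)
        _ = chi d (c j) * S := (Finset.mul_sum _ _ _).symm
    have hz : (chi d (c j) - 1) * S = 0 := by
      rw [sub_mul, one_mul, ← hshift, sub_self]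
    rcases mul_eq_zero.mp hz with h | h
    · exact absurd (sub_eq_zero.mp h) (chi_ne_one d hj)
    · exact h

/-- The phaseless Weyl operator `Z^u X^v`. -/
noncomputable def Gop (u v : Fin n → ZMod d) : Mat d n := Zop d n u * Xop d n v

lemma Gop_apply (u v a b : Fin n → ZMod d) :
    Gop d n u v a b = chi d (∑ i, a i * u i) * (if b = a - v then 1 else 0) := by
  have hiff : (a = b + v) ↔ (b = a - v) := by rw [eq_sub_iff_add_eq, eq_comm]
  simp only [Gop, Zop, Xop, Matrix.diagonal_mul, Matrix.of_apply, chi]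
  rw [if_congr hiff rfl rfl]

lemma Gop_conj_apply (u v : Fin n → ZMod d) (M : Mat d n) (a b : Fin n → ZMod d) :
    (Gop d n u v * M * (Gop d n u v)ᴴ) a b
      = chi d (∑ i, a i * u i) * (starRingEnd ℂ) (chi d (∑ i, b i * u i))
          * M (a - v) (b - v) := by
  have hGM : ∀ y, (Gop d n u v * M) a y = chi d (∑ i, a i * u i) * M (a - v) y := by
    intro y
    rw [Matrix.mul_apply]
    have : ∀ x, Gop d n u v a x * M x y
        = if x = a - v then chi d (∑ i, a i * u i) * M x y else 0 := by
      intro x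
      rw [Gop_apply]
      by_cases hx : x = a - v <;> simp [hx]
    rw [Finset.sum_congr rfl (fun x _ => this x), Finset.sum_ite_eq' Finset.univ (a - v)
      (fun x => chi d (∑ i, a i * u i) * M x y)]
    simp
  rw [Matrix.mul_apply]
  have : ∀ y, (Gop d n u v * M) a y * (Gop d n u v)ᴴ y b
      = if y = b - v then
          chi d (∑ i, a i * u i) * (starRingEnd ℂ) (chi d (∑ i, b i * u i)) * M (a - v) y
        else 0 := by
    intro y
    rw [Matrix.conjTranspose_apply, Gop_apply, hGM]
    by_cases hy : y = b - v <;> simp [hy] <;> ring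
  rw [Finset.sum_congr rfl (fun y _ => this y), Finset.sum_ite_eq' Finset.univ (b - v) _]
  simp

lemma abs_tau : ‖tau d‖ = 1 := by
  have h : ((Real.pi:ℂ) * Complex.I / (d:ℂ)) = ((Real.pi / d : ℝ) : ℂ) * Complex.I := by
    push_cast; ring
  rw [tau, norm_mul, h, Complex.norm_exp, norm_pow]
  simp

lemma tau_ne_zero : tau d ≠ 0 := by
  intro h
  have := abs_tau d
  rw [h] at this
  simp at this

/-- The Weyl operator is the phaseless one up to a unimodular scalar. -/
lemma weyl_eq_smul (h : PSpace d n) :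
    ∃ s : ℂ, ‖s‖ = 1 ∧ Weyl d n h = s • Gop d n h.1 h.2 := by
  refine ⟨tau d ^ (-(∑ i, (((h.1 i) * (h.2 i)).val : ℤ))), ?_, rfl⟩
  rw [norm_zpow, abs_tau, _root_.one_zpow]

lemma weyl_conj (h : PSpace d n) (M : Mat d n) :
    Weyl d n h * M * (Weyl d n h)ᴴ = Gop d n h.1 h.2 * M * (Gop d n h.1 h.2)ᴴ := by
  obtain ⟨s, hs, hW⟩ := weyl_eq_smul d n h
  have hss : star s * s = 1 := by
    rw [star_def, mul_comm, Complex.mul_conj, ← Complex.sq_norm, hs]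
    norm_num
  rw [hW, Matrix.conjTranspose_smul, Matrix.smul_mul, Matrix.mul_smul, Matrix.smul_mul,
    smul_smul, hss, one_smul]

lemma Gop_mul_conjTranspose (u v : Fin n → ZMod d) :
    Gop d n u v * (Gop d n u v)ᴴ = 1 := by
  have h := Gop_conj_apply d n u v 1
  ext a b
  have hab := h a b
  rw [Matrix.mul_one] at hab
  rw [hab]
  rcases eq_or_ne a b with rfl | hne
  · rw [Matrix.one_apply_eq, Matrix.one_apply_eq, mul_one, chi_mul_conj, sub_self, chi_zero]
  · rw [Matrix.one_apply_ne hne, Matrix.one_apply_ne (fun hcon => hne (by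
      have : a - v + v = b - v + v := by rw [hcon]
      simpa using this)), mul_zero]

lemma weyl_mul_conjTranspose (h : PSpace d n) : Weyl d n h * (Weyl d n h)ᴴ = 1 := by
  have := weyl_conj d n h 1
  rw [Matrix.mul_one, Matrix.mul_one] at this
  rw [this, Gop_mul_conjTranspose]

lemma weyl_conjTranspose_mul (h : PSpace d n) : (Weyl d n h)ᴴ * Weyl d n h = 1 :=
  mul_eq_one_comm.mp (weyl_mul_conjTranspose d n h)

/-- The Weyl twirl. -/
lemma twirl (M : Mat d n) :
    ∑ h : PSpace d n, Weyl d n h * M * (Weyl d n h)ᴴ = ((d:ℂ)^n * M.trace) • 1 := by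
  ext a b
  rw [Matrix.sum_apply]
  have h1 : ∀ h : PSpace d n, (Weyl d n h * M * (Weyl d n h)ᴴ) a b
      = chi d (∑ i, (a i - b i) * h.1 i) * M (a - h.2) (b - h.2) := by
    intro h
    rw [weyl_conj, Gop_conj_apply]
    rw [chi_mul_conj]
    congr 2
    rw [← Finset.sum_sub_distrib]
    congr 1; ext i; ring
  rw [Finset.sum_congr rfl (fun h _ => h1 h), Fintype.sum_prod_type]
  have h2 : ∀ u : Fin n → ZMod d,
      ∑ v : Fin n → ZMod d, chi d (∑ i, (a i - b i) * u i) * M (a - v) (b - v)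
        = chi d (∑ i, (a i - b i) * u i) * ∑ v : Fin n → ZMod d, M (a - v) (b - v) := by
    intro u; rw [Finset.mul_sum]
  rw [Finset.sum_congr rfl (fun u _ => h2 u), ← Finset.sum_mul, sum_chi]
  rcases eq_or_ne a b with rfl | hne
  · rw [if_pos (by ext i; simp), Matrix.smul_apply, Matrix.one_apply_eq, smul_eq_mul, mul_one]
    have h3 : ∑ v : Fin n → ZMod d, M (a - v) (a - v) = M.trace := by
      rw [show M.trace = ∑ x : Fin n → ZMod d, M x x from rfl]
      exact Fintype.sum_equiv (Equiv.subLeft a) _ _ (fun v => rfl)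
    rw [h3]
  · rw [if_neg (by
      intro hcon
      apply hne
      ext i
      have := congrFun hcon i
      simpa [sub_eq_zero] using this), zero_mul, Matrix.smul_apply,
      Matrix.one_apply_ne hne, smul_eq_mul, mul_zero]


/-! ### Hilbert-Schmidt norm lemmas -/

/-- A matrix as a vector in Euclidean space. -/
noncomputable def emb (A : Mat d n) :
    EuclideanSpace ℂ ((Fin n → ZMod d) × (Fin n → ZMod d)) := WithLp.toLp 2 (fun p : (Fin n → ZMod d) × (Fin n → ZMod d) => A p.1 p.2)

lemma trInner_self_re (A : Mat d n) :
    (trInner d n A A).re = ((d:ℝ)^n)⁻¹ * ∑ p : (Fin n → ZMod d) × (Fin n → ZMod d),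
      Complex.normSq (A p.1 p.2) := by
  have htr : (Aᴴ * A).trace = ((∑ p : (Fin n → ZMod d) × (Fin n → ZMod d),
      Complex.normSq (A p.1 p.2) : ℝ) : ℂ) := by
    rw [Matrix.trace]
    push_cast
    rw [Fintype.sum_prod_type]
    rw [Finset.sum_comm]
    apply Finset.sum_congr rfl
    intro j _
    rw [Matrix.diag_apply, Matrix.mul_apply]
    apply Finset.sum_congr rfl
    intro i _
    rw [Matrix.conjTranspose_apply, mul_comm]
    exact Complex.mul_conj _
  rw [trInner, htr]
  have : ((d:ℂ)^n)⁻¹ = (((((d:ℝ))^n)⁻¹ : ℝ) : ℂ) := by push_cast; ring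
  rw [this, ← Complex.ofReal_mul, Complex.ofReal_re]

lemma hsNorm_eq (A : Mat d n) :
    hsNorm d n A = (Real.sqrt ((d:ℝ)^n))⁻¹ * ‖emb d n A‖ := by
  have hne : ‖emb d n A‖
      = Real.sqrt (∑ p : (Fin n → ZMod d) × (Fin n → ZMod d), ‖A p.1 p.2‖ ^ 2) :=
    EuclideanSpace.norm_eq (emb d n A)
  rw [hsNorm, trInner_self_re, hne]
  rw [Real.sqrt_mul (by positivity), Real.sqrt_inv]
  congr 1
  congr 1
  apply Finset.sum_congr rfl
  intro p _
  rw [← Complex.sq_norm]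

lemma hsNorm_nonneg (A : Mat d n) : 0 ≤ hsNorm d n A := Real.sqrt_nonneg _

lemma hsNorm_sub_le (A B : Mat d n) :
    hsNorm d n (A - B) ≤ hsNorm d n A + hsNorm d n B := by
  rw [hsNorm_eq, hsNorm_eq, hsNorm_eq, ← mul_add]
  apply mul_le_mul_of_nonneg_left _ (by positivity)
  have : emb d n (A - B) = emb d n A - emb d n B := rfl
  rw [this]
  exact norm_sub_le _ _

lemma hsNorm_eq_of_trace_eq (A B : Mat d n) (h : (Aᴴ * A).trace = (Bᴴ * B).trace) :
    hsNorm d n A = hsNorm d n B := by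
  unfold hsNorm trInner
  rw [h]

lemma hsNorm_mul_right (A V : Mat d n) (h : V * Vᴴ = 1) :
    hsNorm d n (A * V) = hsNorm d n A := by
  apply hsNorm_eq_of_trace_eq
  rw [Matrix.conjTranspose_mul]
  rw [show Vᴴ * Aᴴ * (A * V) = Vᴴ * (Aᴴ * A) * V by
    rw [Matrix.mul_assoc, Matrix.mul_assoc, Matrix.mul_assoc]]
  rw [Matrix.trace_mul_cycle, ← Matrix.mul_assoc, h, Matrix.one_mul]

lemma hsNorm_mul_left (A W : Mat d n) (h : Wᴴ * W = 1) :
    hsNorm d n (W * A) = hsNorm d n A := by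
  apply hsNorm_eq_of_trace_eq
  rw [Matrix.conjTranspose_mul]
  rw [show Aᴴ * Wᴴ * (W * A) = Aᴴ * (Wᴴ * W) * A by
    rw [Matrix.mul_assoc, Matrix.mul_assoc, Matrix.mul_assoc]]
  rw [h, Matrix.mul_one]

lemma hsNorm_smul_one (μ : ℂ) : hsNorm d n (μ • 1) = ‖μ‖ := by
  rw [hsNorm]
  have : (trInner d n (μ • 1) (μ • 1)) = ((Complex.normSq μ : ℝ) : ℂ) := by
    rw [trInner, Matrix.conjTranspose_smul, Matrix.conjTranspose_one]
    rw [Matrix.smul_mul, Matrix.mul_smul, Matrix.one_mul, smul_smul, Matrix.trace_smul,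
      Matrix.trace_one]
    rw [smul_eq_mul, star_def]
    have hn2 : (starRingEnd ℂ) μ * μ = ((Complex.normSq μ : ℝ) : ℂ) := by
      rw [mul_comm]; exact Complex.mul_conj μ
    rw [hn2]
    have hcard : (Fintype.card (Fin n → ZMod d) : ℂ) = (d:ℂ)^n := by
      rw [Fintype.card_fun]
      simp [ZMod.card]
    rw [hcard]
    have hd : ((d:ℂ))^n ≠ 0 := by
      apply pow_ne_zero
      exact_mod_cast Nat.cast_ne_zero.mpr (NeZero.ne d)
    field_simp
  rw [this, Complex.ofReal_re, Complex.norm_def]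

/-! ### The core argument -/

lemma unitary_star_mul {U : Mat d n} (hU : U ∈ unitary (Mat d n)) : Uᴴ * U = 1 := by
  have := hU.1
  rwa [Matrix.star_eq_conjTranspose] at this

lemma unitary_mul_star {U : Mat d n} (hU : U ∈ unitary (Mat d n)) : U * Uᴴ = 1 := by
  have := hU.2
  rwa [Matrix.star_eq_conjTranspose] at this

lemma deriv_norm_le {U : Mat d n} (hU : U ∈ unitary (Mat d n)) (h : PSpace d n) :
    hsNorm d n (pderiv d n h U - 1) ≤ 2 * hsNorm d n (U - 1) := by
  set W := Weyl d n h
  have hWWc : W * Wᴴ = 1 := weyl_mul_conjTranspose d n h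
  have hWcW : Wᴴ * W = 1 := weyl_conjTranspose_mul d n h
  have hUU : U * Uᴴ = 1 := unitary_mul_star d n hU
  have hUsU : Uᴴ * U = 1 := unitary_star_mul d n hU
  have key : hsNorm d n (pderiv d n h U - 1) = hsNorm d n (W * (U - 1) * Wᴴ - (U - 1)) := by
    have e1 : (pderiv d n h U - 1) * U = W * (U - 1) * Wᴴ - (U - 1) := by
      have hpU : pderiv d n h U * U = W * U * Wᴴ := by
        rw [pderiv, Matrix.mul_assoc (W * U * Wᴴ), hUsU, Matrix.mul_one]
      rw [Matrix.sub_mul, hpU, Matrix.one_mul, Matrix.mul_sub, Matrix.sub_mul, Matrix.mul_one,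
        hWWc]
      abel
    calc hsNorm d n (pderiv d n h U - 1) = hsNorm d n ((pderiv d n h U - 1) * U) :=
          (hsNorm_mul_right d n _ U hUU).symm
      _ = hsNorm d n (W * (U - 1) * Wᴴ - (U - 1)) := by rw [e1]
  rw [key]
  calc hsNorm d n (W * (U - 1) * Wᴴ - (U - 1))
      ≤ hsNorm d n (W * (U - 1) * Wᴴ) + hsNorm d n (U - 1) := hsNorm_sub_le d n _ _
    _ = 2 * hsNorm d n (U - 1) := by
        rw [hsNorm_mul_right d n _ _ (by rw [Matrix.conjTranspose_conjTranspose]; exact hWcW),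
          hsNorm_mul_left d n _ _ hWcW]
        ring


/-- The core argument: a unitary all of whose Pauli derivatives are scalar, and which is
`δ`-close to the identity with `δ < √2`, is itself scalar, with phase at most `2δ`. -/
lemma core {U : Mat d n} (hUuni : U ∈ unitary (Mat d n))
    (hder : ∀ h : PSpace d n, ∃ θ : ℝ, pderiv d n h U = Complex.exp (θ * Complex.I) • 1)
    {δ : ℝ} (hUδ : hsNorm d n (U - 1) ≤ δ) (hδ : δ < Real.sqrt 2) :
    ∃ θ ∈ Set.Icc (-(2 * δ)) (2 * δ), U = Complex.exp (θ * Complex.I) • (1 : Mat d n) := by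
  have hUsU : Uᴴ * U = 1 := unitary_star_mul d n hUuni
  have hUU : U * Uᴴ = 1 := unitary_mul_star d n hUuni
  have hδ0 : 0 ≤ δ := le_trans (hsNorm_nonneg d n _) hUδ
  choose θf hθf using hder
  set c : PSpace d n → ℂ := fun h => Complex.exp (θf h * Complex.I) with hc
  have key : ∀ h : PSpace d n, Weyl d n h * U * (Weyl d n h)ᴴ = c h • U := by
    intro h
    have h1 := congrArg (· * U) (hθf h)
    simp only [pderiv] at h1
    rw [Matrix.mul_assoc (Weyl d n h * U * (Weyl d n h)ᴴ), hUsU, Matrix.mul_one,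
      Matrix.smul_mul, Matrix.one_mul] at h1
    exact h1
  have hsum : (∑ h : PSpace d n, c h) • U = ((d:ℂ)^n * U.trace) • 1 := by
    rw [Finset.sum_smul, ← twirl d n U]
    exact Finset.sum_congr rfl (fun h _ => (key h).symm)
  have hdn : ((d:ℂ))^n ≠ 0 := by
    apply pow_ne_zero
    exact_mod_cast Nat.cast_ne_zero.mpr (NeZero.ne d)
  have htr1 : (1 : Mat d n).trace = ((d:ℂ))^n := by
    rw [Matrix.trace_one, Fintype.card_fun]
    simp [ZMod.card]
  rcases eq_or_ne U.trace 0 with hT | hT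
  · exfalso
    have hnorm2 : (trInner d n (U - 1) (U - 1)) = 2 := by
      rw [trInner, Matrix.conjTranspose_sub, Matrix.conjTranspose_one]
      rw [Matrix.sub_mul, Matrix.mul_sub, Matrix.mul_sub, hUsU, Matrix.mul_one,
        Matrix.one_mul, Matrix.mul_one]
      rw [Matrix.trace_sub, Matrix.trace_sub, Matrix.trace_sub, htr1,
        Matrix.trace_conjTranspose, hT, star_zero]
      field_simp [hdn]
      ring
    have : hsNorm d n (U - 1) = Real.sqrt 2 := by
      rw [hsNorm, hnorm2]
      norm_num
    linarith [hUδ, hδ, this ▸ hUδ]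
  · -- U is a scalar
    set S := ∑ h : PSpace d n, c h with hSdef
    have htrace_eq : S * U.trace = (d:ℂ)^n * U.trace * ((d:ℂ))^n := by
      have := congrArg Matrix.trace hsum
      rwa [Matrix.trace_smul, Matrix.trace_smul, htr1, smul_eq_mul, smul_eq_mul] at this
    have hSval : S = (d:ℂ)^n * (d:ℂ)^n := by
      have h1 : S * U.trace = (d:ℂ)^n * (d:ℂ)^n * U.trace := by rw [htrace_eq]; ring
      exact mul_right_cancel₀ hT h1
    have hSne : S ≠ 0 := by rw [hSval]; exact mul_ne_zero hdn hdn
    set lam : ℂ := S⁻¹ * ((d:ℂ)^n * U.trace) with hlamdef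
    have hUlam : U = lam • 1 := by
      calc U = S⁻¹ • (S • U) := by rw [smul_smul, inv_mul_cancel₀ hSne, one_smul]
        _ = S⁻¹ • (((d:ℂ)^n * U.trace) • 1) := by rw [hsum]
        _ = lam • 1 := by rw [smul_smul]
    obtain ⟨x⟩ : Nonempty (Fin n → ZMod d) := inferInstance
    have habs : ‖lam‖ = 1 := by
      have h1 : (lam • (1 : Mat d n))ᴴ * (lam • 1) = 1 := by rw [← hUlam]; exact hUsU
      rw [Matrix.conjTranspose_smul, Matrix.conjTranspose_one, Matrix.smul_mul,
        Matrix.mul_smul, Matrix.one_mul, smul_smul] at h1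
      have h2 := congrFun (congrFun h1 x) x
      rw [Matrix.smul_apply, Matrix.one_apply_eq, smul_eq_mul, mul_one] at h2
      have h3 : Complex.normSq lam = 1 := by
        have : ((Complex.normSq lam : ℝ) : ℂ) = 1 := by
          rw [← h2, star_def, mul_comm]
          exact (Complex.mul_conj lam).symm
        exact_mod_cast this
      rw [Complex.norm_def, h3, Real.sqrt_one]
    have hlam1 : ‖lam - 1‖ ≤ δ := by
      have : U - 1 = (lam - 1) • 1 := by rw [sub_smul, one_smul, hUlam]
      rw [this, hsNorm_smul_one] at hUδ
      exact hUδ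
    have hlamne : lam ≠ 0 := by
      intro h0; rw [h0] at habs; simp at habs
    set θ : ℝ := lam.arg with hθdef
    have hexp : Complex.exp (θ * Complex.I) = lam := by
      have := Complex.norm_mul_exp_arg_mul_I lam
      rwa [habs, Complex.ofReal_one, one_mul] at this
    have hre : lam.re = Real.cos θ := by
      rw [Complex.cos_arg hlamne, habs, div_one]
    have him : lam.im = Real.sin θ := by
      rw [Complex.sin_arg, habs, div_one]
    have hnormsq : Complex.normSq (lam - 1) = 4 * Real.sin (θ/2) ^ 2 := by
      rw [Complex.normSq_apply, Complex.sub_re, Complex.sub_im, Complex.one_re,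
        Complex.one_im, hre, him]
      have h4 : Real.sin (θ/2) ^ 2 = 1/2 - Real.cos (2*(θ/2))/2 := Real.sin_sq_eq_half_sub _
      rw [show 2*(θ/2) = θ by ring] at h4
      nlinarith [Real.sin_sq_add_cos_sq θ]
    have habs1 : ‖lam - 1‖ = 2 * |Real.sin (θ/2)| := by
      rw [Complex.norm_def, hnormsq]
      rw [show (4 : ℝ) * Real.sin (θ/2) ^ 2 = (2 * |Real.sin (θ/2)|) ^ 2 by
        rw [mul_pow, _root_.sq_abs]; ring]
      exact Real.sqrt_sq (by positivity)
    have hθπ : |θ| ≤ Real.pi := Complex.abs_arg_le_pi lam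
    have hsin_abs : |Real.sin (θ/2)| = Real.sin (|θ|/2) := by
      rcases le_or_gt 0 θ with hθ0 | hθ0
      · rw [_root_.abs_of_nonneg hθ0, _root_.abs_of_nonneg]
        apply Real.sin_nonneg_of_nonneg_of_le_pi (by positivity)
        linarith [_root_.abs_of_nonneg hθ0 ▸ hθπ]
      · rw [_root_.abs_of_neg hθ0]
        rw [show -θ/2 = -(θ/2) by ring, Real.sin_neg, _root_.abs_of_nonpos]
        apply Real.sin_nonpos_of_nonpos_of_neg_pi_le (by linarith)
        linarith [_root_.abs_of_neg hθ0 ▸ hθπ]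
    have hjordan : 2/Real.pi * (|θ|/2) ≤ Real.sin (|θ|/2) :=
      Real.mul_le_sin (by positivity) (by linarith [hθπ, Real.pi_pos])
    have hπpos : 0 < Real.pi := Real.pi_pos
    have hθle : |θ| ≤ 2 * δ := by
      have h5 : 2 * Real.sin (|θ|/2) ≤ δ := by
        rw [← hsin_abs, ← habs1]; exact hlam1
      have h6 : 2/Real.pi * (|θ|/2) ≤ δ/2 := by linarith
      have h7 : |θ| / Real.pi ≤ δ/2 := by
        have heq : 2/Real.pi * (|θ|/2) = |θ|/Real.pi := by ring
        linarith [heq ▸ h6]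
      have h8 : |θ|/4 ≤ |θ|/Real.pi := by
        apply div_le_div_of_nonneg_left (abs_nonneg θ) hπpos Real.pi_le_four
      linarith
    refine ⟨θ, ?_, by rw [hexp, ← hUlam]⟩
    rw [Set.mem_Icc]
    constructor
    · linarith [neg_abs_le θ]
    · linarith [le_abs_self θ]

/-- Main induction. -/
lemma main_aux (k : ℕ) : ∀ (U : Mat d n) (δ : ℝ), U ∈ ppoly d n (k+1) →
    hsNorm d n (U - 1) ≤ δ → δ < (2:ℝ) ^ ((3:ℝ)/2 - ((k:ℝ)+1)) →
    ∃ θ ∈ Set.Icc (-(2 * δ)) (2 * δ), U = Complex.exp (θ * Complex.I) • (1 : Mat d n) := by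
  have hle : ∀ m : ℕ, (2:ℝ) ^ ((3:ℝ)/2 - ((m:ℝ)+1)) ≤ Real.sqrt 2 := by
    intro m
    rw [Real.sqrt_eq_rpow]
    apply Real.rpow_le_rpow_of_exponent_le (by norm_num)
    have : (0:ℝ) ≤ (m:ℝ) := Nat.cast_nonneg m
    linarith
  induction k with
  | zero =>
    intro U δ hU hδ1 hδ2
    obtain ⟨huni, hder⟩ := hU
    have hder' : ∀ h : PSpace d n, ∃ θ : ℝ, pderiv d n h U = Complex.exp (θ * Complex.I) • 1 := by
      intro h
      exact hder h
    exact core d n huni hder' hδ1 (lt_of_lt_of_le hδ2 (by simpa using hle 0))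
  | succ k ih =>
    intro U δ hU hδ1 hδ2
    obtain ⟨huni, hder⟩ := hU
    have hdbl : 2 * δ < (2:ℝ) ^ ((3:ℝ)/2 - ((k:ℝ)+1)) := by
      have harith : (3:ℝ)/2 - ((k:ℝ)+1) = ((3:ℝ)/2 - (((k:ℝ)+1)+1)) + 1 := by ring
      rw [harith, Real.rpow_add (by norm_num), Real.rpow_one]
      push_cast at hδ2
      linarith
    have hder' : ∀ h : PSpace d n, ∃ θ : ℝ, pderiv d n h U = Complex.exp (θ * Complex.I) • 1 := by
      intro h
      have hnorm : hsNorm d n (pderiv d n h U - 1) ≤ 2 * δ := by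
        calc hsNorm d n (pderiv d n h U - 1) ≤ 2 * hsNorm d n (U - 1) :=
              deriv_norm_le d n huni h
          _ ≤ 2 * δ := by linarith
      obtain ⟨θ, _, hθ⟩ := ih (pderiv d n h U) (2 * δ) (hder h) hnorm hdbl
      exact ⟨θ, hθ⟩
    exact core d n huni hder' hδ1 (lt_of_lt_of_le hδ2 (hle (k+1)))



theorem stmt14 (d n : ℕ) [NeZero d] (hd : d.Prime) (hn : 1 ≤ n)
    (k : ℕ) (hk : 1 ≤ k) (U : Mat d n) (hU : U ∈ ppoly d n k)
    (δ : ℝ) (hUδ : hsNorm d n (U - 1) ≤ δ) (hδ : δ < (2:ℝ) ^ ((3:ℝ)/2 - k)) :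
    ∃ θ ∈ Set.Icc (-(2 * δ)) (2 * δ),
      U = Complex.exp (θ * Complex.I) • (1 : Mat d n) := by
  obtain ⟨k', rfl⟩ : ∃ k', k = k' + 1 := ⟨k - 1, (Nat.succ_pred_eq_of_pos hk).symm⟩
  apply main_aux d n k' U δ hU hUδ
  push_cast at hδ ⊢
  exact hδ

end CH
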